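/- Let A be a D-simple D-superalgebra with k = A^D, and let V be an A-module in the category of D-supermodules. Then the natural map μ : A ⊗_k V^D → V, a ⊗ v ↦ av, is injective. Equivalently, elements of V^D which are linearly independent over k remain linearly independent over A. -/

import Mathlib

open scoped TensorProduct

universe u

/-- A ℤ/2-grading making the `R`-algebra `A` into a superalgebra
(not necessarily supercommutative). -/
structure SuperRing (R : Type u) [Field R] (A : Type u) [Ring A] [Algebra R A] where
  grade : ZMod 2 → Submodule R A
  internal : DirectSum.IsInternal grade
  one_mem : (1 : A) ∈ grade 0
  mul_mem : ∀ {i j : ZMod 2} {a b : A}, a ∈ grade i → b ∈ grade j → a * b ∈ grade (i + j)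

/-- Super-commutativity of a superalgebra. -/
def SuperRing.SuperComm {R : Type u} [Field R] {A : Type u} [Ring A] [Algebra R A]
    (g : SuperRing R A) : Prop :=
  ∀ {i j : ZMod 2} {a b : A}, a ∈ g.grade i → b ∈ g.grade j →
    a * b = ((-1 : R) ^ (i.val * j.val)) • (b * a)

/-- A super-cocommutative Hopf superalgebra structure on the `R`-algebra `D`.
Sign-sensitive axioms (super-cocommutativity, multiplicativity of the coproduct) are
expressed using arbitrary homogeneous finite representations of coproducts. -/
structure SuperHopf (R : Type u) [Field R] (D : Type u) [Ring D] [Algebra R D]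
    extends SuperRing R D where
  comul : D →ₗ[R] D ⊗[R] D
  counit : D →ₗ[R] R
  coassoc : (TensorProduct.assoc R D D D).toLinearMap ∘ₗ
      (TensorProduct.map comul LinearMap.id) ∘ₗ comul
    = (TensorProduct.map LinearMap.id comul) ∘ₗ comul
  counit_comul_left : ∀ d : D,
    (TensorProduct.lid R D) ((TensorProduct.map counit LinearMap.id) (comul d)) = d
  counit_comul_right : ∀ d : D,
    (TensorProduct.rid R D) ((TensorProduct.map LinearMap.id counit) (comul d)) = d
  comul_one : comul 1 = 1 ⊗ₜ[R] 1
  counit_one : counit 1 = 1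
  comul_mul : ∀ (d d' : D) (ι κ : Type u) (s : Finset ι) (t : Finset κ)
    (x y : ι → D) (py : ι → ZMod 2) (w v : κ → D) (pw : κ → ZMod 2),
    (∀ i ∈ s, y i ∈ grade (py i)) → (∀ j ∈ t, w j ∈ grade (pw j)) →
    (∑ i ∈ s, x i ⊗ₜ[R] y i) = comul d → (∑ j ∈ t, w j ⊗ₜ[R] v j) = comul d' →
    comul (d * d') = ∑ i ∈ s, ∑ j ∈ t,
      ((-1 : R) ^ ((py i).val * (pw j).val)) • ((x i * w j) ⊗ₜ[R] (y i * v j))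
  counit_mul : ∀ d d' : D, counit (d * d') = counit d * counit d'
  comul_grade : ∀ (p : ZMod 2), ∀ d ∈ grade p, comul d ∈
    ⨆ q : ZMod 2, LinearMap.range
      (TensorProduct.map (grade q).subtype (grade (p - q)).subtype)
  counit_odd : ∀ d ∈ grade 1, counit d = 0
  cocomm : ∀ (d : D) (ι : Type u) (s : Finset ι) (x y : ι → D) (px py : ι → ZMod 2),
    (∀ i ∈ s, x i ∈ grade (px i)) → (∀ i ∈ s, y i ∈ grade (py i)) →
    (∑ i ∈ s, x i ⊗ₜ[R] y i) = comul d →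
    (∑ i ∈ s, ((-1 : R) ^ ((px i).val * (py i).val)) • (y i ⊗ₜ[R] x i)) = comul d
  antipode : D →ₗ[R] D
  antipode_left : ∀ d : D,
    (LinearMap.mul' R D) ((TensorProduct.map antipode LinearMap.id) (comul d))
      = counit d • 1
  antipode_right : ∀ d : D,
    (LinearMap.mul' R D) ((TensorProduct.map LinearMap.id antipode) (comul d))
      = counit d • 1

/-- A (left) action of the Hopf superalgebra `D` on the superalgebra `A`, making `A`
a `D`-superalgebra, i.e. an algebra in the symmetric monoidal category of
`D`-supermodules; the Koszul sign in the multiplicativity axiom is expressed via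
homogeneous representations of the coproduct. -/
structure SuperAction (R : Type u) [Field R] (D A : Type u) [Ring D] [Algebra R D]
    [Ring A] [Algebra R A] (H : SuperHopf R D) (g : SuperRing R A) where
  act : D →ₗ[R] A →ₗ[R] A
  act_one : act 1 = LinearMap.id
  act_mul : ∀ d d' : D, act (d * d') = act d ∘ₗ act d'
  act_grade : ∀ {p q : ZMod 2} {d : D} {a : A}, d ∈ H.grade p → a ∈ g.grade q →
    act d a ∈ g.grade (p + q)
  act_algebra_one : ∀ d : D, act d (1 : A) = H.counit d • (1 : A)
  act_algebra_mul : ∀ (d : D) (a b : A) (p : ZMod 2), a ∈ g.grade p →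
    ∀ (ι : Type u) (s : Finset ι) (x y : ι → D) (py : ι → ZMod 2),
    (∀ i ∈ s, y i ∈ H.grade (py i)) →
    (∑ i ∈ s, x i ⊗ₜ[R] y i) = H.comul d →
    act d (a * b) = ∑ i ∈ s,
      ((-1 : R) ^ (p.val * (py i).val)) • (act (x i) a * act (y i) b)

/-- The `D`-invariants `A^D` of a `D`-superalgebra. -/
def SuperAction.invariants {R : Type u} [Field R] {D A : Type u} [Ring D] [Algebra R D]
    [Ring A] [Algebra R A] {H : SuperHopf R D} {g : SuperRing R A}
    (S : SuperAction R D A H g) : Submodule R A where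
  carrier := {a : A | ∀ d : D, S.act d a = H.counit d • a}
  add_mem' := by
    intro a b ha hb
    intro d
    simp only [map_add, ha d, hb d, smul_add]
  zero_mem' := by intro d; simp
  smul_mem' := by
    intro r a ha
    intro d
    simp only [map_smul, ha d]
    rw [smul_comm]

/-- A homogeneous two-sided ideal (super-ideal). -/
def SuperRing.IsSuperIdeal {R : Type u} [Field R] {A : Type u} [Ring A] [Algebra R A]
    (g : SuperRing R A) (I : Submodule R A) : Prop :=
  (∀ a : A, ∀ x ∈ I, a * x ∈ I) ∧ (∀ a : A, ∀ x ∈ I, x * a ∈ I) ∧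
    I = (I ⊓ g.grade 0) ⊔ (I ⊓ g.grade 1)

/-- `D`-simplicity: `A ≠ 0` and `A` has no nontrivial `D`-stable super-ideal. -/
def SuperAction.IsSimple {R : Type u} [Field R] {D A : Type u} [Ring D] [Algebra R D]
    [Ring A] [Algebra R A] {H : SuperHopf R D} {g : SuperRing R A}
    (S : SuperAction R D A H g) : Prop :=
  (1 : A) ≠ 0 ∧ ∀ I : Submodule R A, g.IsSuperIdeal I →
    (∀ d : D, ∀ x ∈ I, S.act d x ∈ I) → I = ⊥ ∨ I = ⊤

/-- An `A`-module in the category of `D`-supermodules. -/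
structure SuperModule (R : Type u) [Field R] (D A V : Type u) [Ring D] [Algebra R D]
    [Ring A] [Algebra R A] [AddCommGroup V] [Module R V]
    (H : SuperHopf R D) (g : SuperRing R A) (S : SuperAction R D A H g) where
  gradeV : ZMod 2 → Submodule R V
  internalV : DirectSum.IsInternal gradeV
  smulA : A →ₗ[R] V →ₗ[R] V
  smulA_one : smulA 1 = LinearMap.id
  smulA_mul : ∀ a b : A, smulA (a * b) = smulA a ∘ₗ smulA b
  smulA_grade : ∀ {i j : ZMod 2} {a : A} {v : V}, a ∈ g.grade i → v ∈ gradeV j →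
    smulA a v ∈ gradeV (i + j)
  actV : D →ₗ[R] V →ₗ[R] V
  actV_one : actV 1 = LinearMap.id
  actV_mul : ∀ d d' : D, actV (d * d') = actV d ∘ₗ actV d'
  actV_grade : ∀ {p q : ZMod 2} {d : D} {v : V}, d ∈ H.grade p → v ∈ gradeV q →
    actV d v ∈ gradeV (p + q)
  actV_smulA : ∀ (d : D) (a : A) (v : V) (p : ZMod 2), a ∈ g.grade p →
    ∀ (ι : Type u) (s : Finset ι) (x y : ι → D) (py : ι → ZMod 2),
    (∀ i ∈ s, y i ∈ H.grade (py i)) →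
    (∑ i ∈ s, x i ⊗ₜ[R] y i) = H.comul d →
    actV d (smulA a v) = ∑ i ∈ s,
      ((-1 : R) ^ (p.val * (py i).val)) • smulA (S.act (x i) a) (actV (y i) v)

/-- The `D`-invariants `V^D` of a `D`-supermodule. -/
def SuperModule.invariantsV {R : Type u} [Field R] {D A V : Type u} [Ring D] [Algebra R D]
    [Ring A] [Algebra R A] [AddCommGroup V] [Module R V]
    {H : SuperHopf R D} {g : SuperRing R A} {S : SuperAction R D A H g}
    (M : SuperModule R D A V H g S) : Submodule R V where
  carrier := {v : V | ∀ d : D, M.actV d v = H.counit d • v}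
  add_mem' := by
    intro a b ha hb d
    simp only [map_add, ha d, hb d, smul_add]
  zero_mem' := by intro d; simp
  smul_mem' := by
    intro r v hv d
    simp only [map_smul, hv d]
    rw [smul_comm]


section Grading
variable {R : Type u} [Field R] {W : Type u} [AddCommGroup W] [Module R W]

lemma zmod2_cases (p : ZMod 2) : p = 0 ∨ p = 1 := by revert p; decide

variable (G : ZMod 2 → Submodule R W) (hG : DirectSum.IsInternal G)
include hG

lemma grading_isCompl : IsCompl (G 0) (G 1) := by
  rw [DirectSum.isInternal_submodule_iff_isCompl G (by decide : (0:ZMod 2) ≠ 1)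
    (by ext p; simpa using zmod2_cases p)] at hG
  exact hG

noncomputable def pr0 : W →ₗ[R] W :=
  (G 0).subtype ∘ₗ (G 0).projectionOnto (G 1) (grading_isCompl G hG)

noncomputable def pr1 : W →ₗ[R] W :=
  (G 1).subtype ∘ₗ (G 1).projectionOnto (G 0) (grading_isCompl G hG).symm

lemma pr0_mem (x : W) : pr0 G hG x ∈ G 0 := ((G 0).projectionOnto (G 1) _ x).2
lemma pr1_mem (x : W) : pr1 G hG x ∈ G 1 := ((G 1).projectionOnto (G 0) _ x).2

lemma pr_add (x : W) : pr0 G hG x + pr1 G hG x = x :=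
  Submodule.projection_add_projection_eq_self (grading_isCompl G hG) x

lemma pr0_of_mem0 {x : W} (hx : x ∈ G 0) : pr0 G hG x = x := by
  have h : ((G 0).projectionOnto (G 1) (grading_isCompl G hG)) x = ⟨x, hx⟩ :=
    Submodule.linearProjOfIsCompl_apply_left _ ⟨x, hx⟩
  simp [pr0, h]

lemma pr1_of_mem1 {x : W} (hx : x ∈ G 1) : pr1 G hG x = x := by
  have h : ((G 1).projectionOnto (G 0) (grading_isCompl G hG).symm) x = ⟨x, hx⟩ :=
    Submodule.linearProjOfIsCompl_apply_left _ ⟨x, hx⟩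
  simp [pr1, h]

lemma pr0_of_mem1 {x : W} (hx : x ∈ G 1) : pr0 G hG x = 0 := by
  have h := Submodule.projectionOnto_apply_of_mem_right (grading_isCompl G hG) hx
  simp [pr0, h]

lemma pr1_of_mem0 {x : W} (hx : x ∈ G 0) : pr1 G hG x = 0 := by
  have h := Submodule.projectionOnto_apply_of_mem_right (grading_isCompl G hG).symm hx
  simp [pr1, h]

/-- The parity operator. -/
noncomputable def sgm : W →ₗ[R] W := pr0 G hG - pr1 G hG

lemma sgm_of_mem {p : ZMod 2} {x : W} (hx : x ∈ G p) :
    sgm G hG x = ((-1 : R) ^ p.val) • x := by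
  rcases zmod2_cases p with h | h <;> subst h <;>
    simp [sgm, pr0_of_mem0 G hG, pr1_of_mem0 G hG, pr0_of_mem1 G hG, pr1_of_mem1 G hG, hx,
      show ((0 : ZMod 2)).val = 0 from rfl, show ((1 : ZMod 2)).val = 1 from rfl]

lemma sgm_sgm (x : W) : sgm G hG (sgm G hG x) = x := by
  conv_rhs => rw [← pr_add G hG x]
  have h0 := sgm_of_mem G hG (pr0_mem G hG x)
  have h1 := sgm_of_mem G hG (pr1_mem G hG x)
  have : sgm G hG x = pr0 G hG x - pr1 G hG x := rfl
  rw [this, map_sub, h0, h1]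
  simp [show ((0 : ZMod 2)).val = 0 from rfl, show ((1 : ZMod 2)).val = 1 from rfl, sub_eq_add_neg]

lemma sgm_inj : Function.Injective (sgm G hG) := by
  intro x y h
  have := congrArg (sgm G hG) h
  rwa [sgm_sgm, sgm_sgm] at this

end Grading

section Signs
variable {R : Type u} [Field R]

lemma sgn_add (p q : ZMod 2) :
    ((-1 : R) ^ ((p + q).val)) = (-1 : R) ^ p.val * (-1 : R) ^ q.val := by
  rcases zmod2_cases p with hp | hp <;> rcases zmod2_cases q with hq | hq <;>
    subst hp <;> subst hq <;>
    norm_num [show ((0:ZMod 2) + 0).val = 0 from rfl, show ((0:ZMod 2) + 1).val = 1 from rfl,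
      show ((1:ZMod 2) + 0).val = 1 from rfl, show ((1:ZMod 2) + 1).val = 0 from rfl,
      show ((2:ZMod 2)).val = 0 from rfl,
      show ((0:ZMod 2)).val = 0 from rfl, show ((1:ZMod 2)).val = 1 from rfl]

end Signs

section SuperLemmas
variable {R D A V : Type u} [Field R] [Ring D] [Algebra R D]
    [Ring A] [Algebra R A] [AddCommGroup V] [Module R V]

/-- Parity operator on `A`. -/
noncomputable def sgA (g : SuperRing R A) : A →ₗ[R] A := sgm g.grade g.internal

/-- Parity operator on `D`. -/
noncomputable def sgD (H : SuperHopf R D) : D →ₗ[R] D :=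
  sgm H.grade H.toSuperRing.internal

variable (H : SuperHopf R D) (g : SuperRing R A)

lemma counit_sgD (d : D) : H.counit (sgD H d) = H.counit d := by
  have h : sgD H d = pr0 H.grade H.toSuperRing.internal d
      - pr1 H.grade H.toSuperRing.internal d := rfl
  conv_rhs => rw [← pr_add H.grade H.toSuperRing.internal d]
  rw [h, map_sub, map_add, H.counit_odd _ (pr1_mem H.grade H.toSuperRing.internal d)]
  ring

lemma sgD_sgD (d : D) : sgD H (sgD H d) = d := sgm_sgm _ _ d

lemma sgA_sgA (a : A) : sgA g (sgA g a) = a := sgm_sgm _ _ a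

lemma sgA_mul (a b : A) : sgA g (a * b) = sgA g a * sgA g b := by
  have key : ∀ (p q : ZMod 2) (a b : A), a ∈ g.grade p → b ∈ g.grade q →
      sgA g (a * b) = sgA g a * sgA g b := by
    intro p q a b ha hb
    rw [show sgA g = sgm g.grade g.internal from rfl,
      sgm_of_mem _ _ (g.mul_mem ha hb), sgm_of_mem _ _ ha, sgm_of_mem _ _ hb,
      smul_mul_smul_comm, ← sgn_add]
  have h00 := key 0 0 _ _ (pr0_mem g.grade g.internal a) (pr0_mem g.grade g.internal b)
  have h01 := key 0 1 _ _ (pr0_mem g.grade g.internal a) (pr1_mem g.grade g.internal b)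
  have h10 := key 1 0 _ _ (pr1_mem g.grade g.internal a) (pr0_mem g.grade g.internal b)
  have h11 := key 1 1 _ _ (pr1_mem g.grade g.internal a) (pr1_mem g.grade g.internal b)
  conv_lhs => rw [← pr_add g.grade g.internal a, ← pr_add g.grade g.internal b]
  conv_rhs => rw [← pr_add g.grade g.internal a, ← pr_add g.grade g.internal b]
  rw [add_mul, mul_add, mul_add, map_add, map_add, map_add, h00, h01, h10, h11,
    map_add, map_add, add_mul, mul_add, mul_add]

variable (S : SuperAction R D A H g)

lemma act_sgD_sgA (d : D) (a : A) :
    S.act (sgD H d) (sgA g a) = sgA g (S.act d a) := by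
  have key : ∀ (p q : ZMod 2) (d : D) (a : A), d ∈ H.grade p → a ∈ g.grade q →
      S.act (sgD H d) (sgA g a) = sgA g (S.act d a) := by
    intro p q d a hd ha
    rw [show sgD H d = ((-1:R) ^ p.val) • d from sgm_of_mem _ _ hd,
      show sgA g a = ((-1:R) ^ q.val) • a from sgm_of_mem _ _ ha]
    simp only [map_smul, LinearMap.smul_apply, smul_smul]
    rw [show sgA g (S.act d a) = ((-1:R) ^ ((p+q).val)) • S.act d a from
        sgm_of_mem _ _ (S.act_grade hd ha), sgn_add]
    congr 1
    ring
  have e1 := pr_add H.grade H.toSuperRing.internal d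
  have e2 := pr_add g.grade g.internal a
  conv_lhs => rw [← e1, ← e2]
  conv_rhs => rw [← e1, ← e2]
  simp only [map_add, LinearMap.add_apply]
  rw [key 0 0 _ _ (pr0_mem _ _ d) (pr0_mem _ _ a), key 0 1 _ _ (pr0_mem _ _ d) (pr1_mem _ _ a),
    key 1 0 _ _ (pr1_mem _ _ d) (pr0_mem _ _ a), key 1 1 _ _ (pr1_mem _ _ d) (pr1_mem _ _ a)]

lemma act_sgA_eq (d : D) (a : A) :
    S.act d (sgA g a) = sgA g (S.act (sgD H d) a) := by
  conv_lhs => rw [← sgD_sgD H d]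
  rw [act_sgD_sgA]

end SuperLemmas

section Repr
variable {R D : Type u} [Field R] [Ring D] [Algebra R D]

lemma my_sum_range_add {M : Type*} [AddCommMonoid M] (f : ℕ → M) (m n : ℕ) :
    ∑ i ∈ Finset.range (m + n), f i
      = (∑ i ∈ Finset.range m, f i) + ∑ i ∈ Finset.range n, f (m + i) := by
  induction n with
  | zero => simp
  | succ n ih =>
      rw [show m + (n + 1) = (m + n) + 1 from rfl, Finset.sum_range_succ, ih,
        Finset.sum_range_succ, add_assoc]

lemma exists_repr (H : SuperHopf R D) (t : D ⊗[R] D) :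
    ∃ (n : ℕ) (x y : ℕ → D) (py : ℕ → ZMod 2),
      (∀ i, i < n → y i ∈ H.grade (py i)) ∧ (∑ i ∈ Finset.range n, x i ⊗ₜ[R] y i) = t := by
  induction t using TensorProduct.induction_on with
  | zero => exact ⟨0, (fun _ => 0), (fun _ => 0), (fun _ => 0), by omega, by simp⟩
  | tmul a b =>
      refine ⟨2, fun _ => a,
        fun i => if i = 0 then pr0 H.grade H.toSuperRing.internal b
          else pr1 H.grade H.toSuperRing.internal b,
        fun i => if i = 0 then 0 else 1, ?_, ?_⟩
      · intro i _
        by_cases h : i = 0 <;>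
          simp [h, pr0_mem H.grade H.toSuperRing.internal, pr1_mem H.grade H.toSuperRing.internal]
      · rw [show (2:ℕ) = 1 + 1 from rfl, Finset.sum_range_succ, Finset.sum_range_succ,
          Finset.sum_range_zero]
        simp only [zero_add, if_true, if_neg one_ne_zero]
        rw [← TensorProduct.tmul_add, pr_add]
  | add t1 t2 ih1 ih2 =>
      obtain ⟨n1, x1, y1, py1, h1, e1⟩ := ih1
      obtain ⟨n2, x2, y2, py2, h2, e2⟩ := ih2
      refine ⟨n1 + n2, fun i => if i < n1 then x1 i else x2 (i - n1),
        fun i => if i < n1 then y1 i else y2 (i - n1),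
        fun i => if i < n1 then py1 i else py2 (i - n1), ?_, ?_⟩
      · intro i hi
        by_cases h : i < n1 <;> simp only [h, if_true, if_false]
        · exact h1 i h
        · exact h2 _ (by omega)
      · rw [my_sum_range_add]
        have ha : ∀ i ∈ Finset.range n1,
            (if i < n1 then x1 i else x2 (i - n1)) ⊗ₜ[R] (if i < n1 then y1 i else y2 (i - n1))
            = x1 i ⊗ₜ[R] y1 i := by
          intro i hi
          rw [Finset.mem_range] at hi
          simp [hi]
        have hb : ∀ i ∈ Finset.range n2,
            (if n1 + i < n1 then x1 (n1+i) else x2 (n1 + i - n1)) ⊗ₜ[R]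
              (if n1 + i < n1 then y1 (n1+i) else y2 (n1 + i - n1))
            = x2 i ⊗ₜ[R] y2 i := by
          intro i _
          simp [show ¬ (n1 + i < n1) by omega, show n1 + i - n1 = i by omega]
        rw [Finset.sum_congr rfl ha, Finset.sum_congr rfl hb, e1, e2]

lemma exists_repr' (H : SuperHopf R D) (t : D ⊗[R] D) :
    ∃ (s : Finset (ULift.{u} ℕ)) (x y : ULift.{u} ℕ → D) (py : ULift.{u} ℕ → ZMod 2),
      (∀ i ∈ s, y i ∈ H.grade (py i)) ∧ (∑ i ∈ s, x i ⊗ₜ[R] y i) = t := by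
  obtain ⟨n, x, y, py, h1, h2⟩ := exists_repr H t
  refine ⟨(Finset.range n).map (Equiv.ulift.symm.toEmbedding),
    fun i => x i.down, fun i => y i.down, fun i => py i.down, ?_, ?_⟩
  · intro i hi
    rw [Finset.mem_map] at hi
    obtain ⟨j, hj, rfl⟩ := hi
    exact h1 j (Finset.mem_range.1 hj)
  · rw [Finset.sum_map]
    exact h2

end Repr

section KeyLemma
variable {R D A V : Type u} [Field R] [Ring D] [Algebra R D]
    [Ring A] [Algebra R A] [AddCommGroup V] [Module R V]
    {H : SuperHopf R D} {g : SuperRing R A} {S : SuperAction R D A H g}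

lemma mem_invariants_iff {a : A} :
    a ∈ S.invariants ↔ ∀ d : D, S.act d a = H.counit d • a := Iff.rfl

lemma mem_invariantsV_iff {M : SuperModule R D A V H g S} {v : V} :
    v ∈ M.invariantsV ↔ ∀ d : D, M.actV d v = H.counit d • v := Iff.rfl

lemma actV_smulA_of_invariant (M : SuperModule R D A V H g S) (d : D) (a : A) {v : V}
    (hv : v ∈ M.invariantsV) : M.actV d (M.smulA a v) = M.smulA (S.act d a) v := by
  have hv' : ∀ d' : D, M.actV d' v = H.counit d' • v := hv
  have key : ∀ (p : ZMod 2) (a : A), a ∈ g.grade p →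
      M.actV d (M.smulA a v) = M.smulA (S.act d a) v := by
    intro p a ha
    obtain ⟨s, x, y, py, h1, h2⟩ := exists_repr' H (H.comul d)
    have hd : (∑ i ∈ s, H.counit (y i) • x i) = d := by
      have hc := H.counit_comul_right d
      rw [← h2, map_sum, map_sum] at hc
      simpa [TensorProduct.map_tmul, TensorProduct.rid_tmul] using hc
    rw [M.actV_smulA d a v p ha _ s x y py h1 h2]
    have hterm : ∀ i ∈ s,
        ((-1:R) ^ (p.val * (py i).val)) • M.smulA (S.act (x i) a) (M.actV (y i) v)
        = H.counit (y i) • M.smulA (S.act (x i) a) v := by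
      intro i hi
      rw [hv' (y i), map_smul]
      rcases zmod2_cases (py i) with h | h
      · rw [h]
        norm_num [show ((0:ZMod 2)).val = 0 from rfl]
      · rw [H.counit_odd (y i) (h ▸ h1 i hi)]
        simp
    rw [Finset.sum_congr rfl hterm, ← hd]
    simp [map_sum, LinearMap.sum_apply, map_smul, LinearMap.smul_apply]
  have e2 := pr_add g.grade g.internal a
  conv_lhs => rw [← e2]
  conv_rhs => rw [← e2]
  simp only [map_add, LinearMap.add_apply]
  rw [key 0 _ (pr0_mem _ _ a), key 1 _ (pr1_mem _ _ a)]

end KeyLemma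

section SuperIdeal
variable {R A : Type u} [Field R] [CharZero R] [Ring A] [Algebra R A]

lemma superideal_of (g : SuperRing R A) (hg : g.SuperComm) (L : Submodule R A)
    (hleft : ∀ a z : A, z ∈ L → a * z ∈ L)
    (hsg : ∀ z ∈ L, sgA g z ∈ L) : g.IsSuperIdeal L := by
  have hcomp0 : ∀ z ∈ L, pr0 g.grade g.internal z ∈ L := by
    intro z hz
    have h : pr0 g.grade g.internal z = ((2:R)⁻¹) • (z + sgA g z) := by
      have hz' := pr_add g.grade g.internal z
      have h2 : z + sgA g z = (2:R) • pr0 g.grade g.internal z := by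
        have hs : sgA g z = pr0 g.grade g.internal z - pr1 g.grade g.internal z := rfl
        rw [hs, two_smul]
        nth_rewrite 1 [← hz']
        abel
      rw [h2, smul_smul]
      norm_num
    rw [h]
    exact L.smul_mem _ (L.add_mem hz (hsg z hz))
  have hcomp1 : ∀ z ∈ L, pr1 g.grade g.internal z ∈ L := by
    intro z hz
    have h : pr1 g.grade g.internal z = z - pr0 g.grade g.internal z := by
      rw [eq_sub_iff_add_eq, add_comm]
      exact pr_add g.grade g.internal z
    rw [h]
    exact L.sub_mem hz (hcomp0 z hz)
  refine ⟨fun a x hx => hleft a x hx, ?_, ?_⟩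
  · intro a x hx
    have key : ∀ (p q : ZMod 2) (xp aq : A), xp ∈ g.grade p → aq ∈ g.grade q →
        xp ∈ L → xp * aq ∈ L := by
      intro p q xp aq hp hq hxp
      rw [hg hp hq]
      exact L.smul_mem _ (hleft aq xp hxp)
    have e1 := pr_add g.grade g.internal x
    have e2 := pr_add g.grade g.internal a
    have hx0 := hcomp0 x hx
    have hx1 := hcomp1 x hx
    have hxa : x * a = (pr0 g.grade g.internal x + pr1 g.grade g.internal x)
        * (pr0 g.grade g.internal a + pr1 g.grade g.internal a) := by rw [e1, e2]
    rw [hxa, add_mul, mul_add, mul_add]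
    refine L.add_mem (L.add_mem ?_ ?_) (L.add_mem ?_ ?_)
    · exact key 0 0 _ _ (pr0_mem _ _ x) (pr0_mem _ _ a) hx0
    · exact key 0 1 _ _ (pr0_mem _ _ x) (pr1_mem _ _ a) hx0
    · exact key 1 0 _ _ (pr1_mem _ _ x) (pr0_mem _ _ a) hx1
    · exact key 1 1 _ _ (pr1_mem _ _ x) (pr1_mem _ _ a) hx1
  · apply le_antisymm
    · intro x hx
      rw [Submodule.mem_sup]
      exact ⟨pr0 g.grade g.internal x, ⟨hcomp0 x hx, pr0_mem _ _ x⟩,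
        pr1 g.grade g.internal x, ⟨hcomp1 x hx, pr1_mem _ _ x⟩, pr_add g.grade g.internal x⟩
    · exact sup_le inf_le_left inf_le_left

end SuperIdeal

/-!
STATEMENT 6: Let `A` be a `D`-simple `D`-superalgebra with `k = A^D`, and `V` an
`A`-module in `D`-supermodules.  Then the natural map `μ : A ⊗_k V^D → V` is
injective; equivalently (and as formalized here): any family of elements of `V^D`
which is linearly independent over `k = A^D` remains linearly independent over `A`.
-/

theorem stmt6 {R D A V : Type u} [Field R] [CharZero R] [Ring D] [Algebra R D]
    [Ring A] [Algebra R A] [AddCommGroup V] [Module R V]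
    (H : SuperHopf R D) (g : SuperRing R A) (hg : g.SuperComm)
    (S : SuperAction R D A H g) (hs : S.IsSimple)
    (M : SuperModule R D A V H g S) :
    ∀ (n : ℕ) (v : Fin n → V), (∀ i, v i ∈ M.invariantsV) →
      (∀ c : Fin n → A, (∀ i, c i ∈ S.invariants) →
        (∑ i, M.smulA (c i) (v i)) = 0 → ∀ i, c i = 0) →
      (∀ c : Fin n → A, (∑ i, M.smulA (c i) (v i)) = 0 → ∀ i, c i = 0) := by
  classical
  intro n v hv hLI
  by_contra hcon
  push_neg at hcon
  obtain ⟨c₀, hc₀rel, i₀, hc₀ne⟩ := hcon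
  -- closure properties of the space of relations
  have rel_add : ∀ (ca cb : Fin n → A), (∑ i, M.smulA (ca i) (v i)) = 0 →
      (∑ i, M.smulA (cb i) (v i)) = 0 → (∑ i, M.smulA (ca i + cb i) (v i)) = 0 := by
    intro ca cb h1 h2
    have h : ∀ i ∈ Finset.univ, M.smulA (ca i + cb i) (v i)
        = M.smulA (ca i) (v i) + M.smulA (cb i) (v i) :=
      fun i _ => by rw [map_add, LinearMap.add_apply]
    rw [Finset.sum_congr rfl h, Finset.sum_add_distrib, h1, h2, add_zero]
  have rel_smul : ∀ (r : R) (ca : Fin n → A), (∑ i, M.smulA (ca i) (v i)) = 0 →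
      (∑ i, M.smulA (r • ca i) (v i)) = 0 := by
    intro r ca h1
    have h : ∀ i ∈ Finset.univ, M.smulA (r • ca i) (v i) = r • M.smulA (ca i) (v i) :=
      fun i _ => by rw [map_smul, LinearMap.smul_apply]
    rw [Finset.sum_congr rfl h, ← Finset.smul_sum, h1, smul_zero]
  have rel_mul : ∀ (a : A) (ca : Fin n → A), (∑ i, M.smulA (ca i) (v i)) = 0 →
      (∑ i, M.smulA (a * ca i) (v i)) = 0 := by
    intro a ca h1
    have h : ∀ i ∈ Finset.univ, M.smulA (a * ca i) (v i)
        = M.smulA a (M.smulA (ca i) (v i)) := fun i _ => by rw [M.smulA_mul]; rfl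
    rw [Finset.sum_congr rfl h, ← map_sum, h1, map_zero]
  have rel_act : ∀ (d : D) (ca : Fin n → A), (∑ i, M.smulA (ca i) (v i)) = 0 →
      (∑ i, M.smulA (S.act d (ca i)) (v i)) = 0 := by
    intro d ca h1
    have h : ∀ i ∈ Finset.univ, M.smulA (S.act d (ca i)) (v i)
        = M.actV d (M.smulA (ca i) (v i)) :=
      fun i _ => (actV_smulA_of_invariant M d (ca i) (hv i)).symm
    rw [Finset.sum_congr rfl h, ← map_sum, h1, map_zero]
  have rel_e : ∀ (d : D) (ca : Fin n → A), (∑ i, M.smulA (ca i) (v i)) = 0 →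
      (∑ i, M.smulA (S.act d (ca i) - H.counit d • ca i) (v i)) = 0 := by
    intro d ca h1
    have h : ∀ i ∈ Finset.univ, M.smulA (S.act d (ca i) - H.counit d • ca i) (v i)
        = M.actV d (M.smulA (ca i) (v i)) - H.counit d • M.smulA (ca i) (v i) := by
      intro i _
      rw [map_sub, LinearMap.sub_apply, ← actV_smulA_of_invariant M d (ca i) (hv i),
        map_smul, LinearMap.smul_apply]
    rw [Finset.sum_congr rfl h, Finset.sum_sub_distrib, ← map_sum, ← Finset.smul_sum, h1,
      map_zero, smul_zero, sub_zero]
  -- minimal support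
  let Supp : (Fin n → A) → Finset (Fin n) := fun c => Finset.univ.filter (fun i => c i ≠ 0)
  let N : Set ℕ := {k | ∃ c : Fin n → A, (∑ i, M.smulA (c i) (v i)) = 0 ∧ (∃ i, c i ≠ 0) ∧
    (Supp c).card = k}
  have hNne : N.Nonempty := ⟨(Supp c₀).card, c₀, hc₀rel, ⟨i₀, hc₀ne⟩, rfl⟩
  obtain ⟨c, hcrel, ⟨iw, hiw⟩, hcard⟩ := Nat.sInf_mem hNne
  set m := sInf N with hm
  set T : Finset (Fin n) := Supp c with hT
  have hiwT : iw ∈ T := by simp [hT, Supp, hiw]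
  have hcsupp : ∀ i, i ∉ T → c i = 0 := by
    intro i hi
    by_contra hne
    exact hi (by simp [hT, Supp, hne])
  have hmin : ∀ c' : Fin n → A, (∑ i, M.smulA (c' i) (v i)) = 0 → (∀ i, i ∉ T → c' i = 0) →
      c' iw = 0 → ∀ i, c' i = 0 := by
    intro c' h1 h2 h3
    by_contra hne
    push_neg at hne
    obtain ⟨j, hj⟩ := hne
    have hsub : Supp c' ⊆ T.erase iw := by
      intro i hi
      have hi' : c' i ≠ 0 := by simpa [Supp] using hi
      refine Finset.mem_erase.2 ⟨fun he => hi' (he ▸ h3), ?_⟩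
      by_contra ht
      exact hi' (h2 i ht)
    have hlt : (Supp c').card < m := by
      calc (Supp c').card ≤ (T.erase iw).card := Finset.card_le_card hsub
        _ < T.card := Finset.card_erase_lt_of_mem hiwT
        _ = m := hcard
    exact absurd (Nat.sInf_le (show (Supp c').card ∈ N by exact ⟨c', h1, ⟨j, hj⟩, rfl⟩))
      (not_le.2 hlt)
  -- the ideal J
  let J : Submodule R A :=
    { carrier := {z | ∃ c' : Fin n → A, (∑ i, M.smulA (c' i) (v i)) = 0 ∧
        (∀ i, i ∉ T → c' i = 0) ∧ c' iw = z}
      add_mem' := by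
        rintro za zb ⟨ca, h1a, h2a, h3a⟩ ⟨cb, h1b, h2b, h3b⟩
        exact ⟨fun i => ca i + cb i, rel_add ca cb h1a h1b,
          fun i hi => by show ca i + cb i = 0; rw [h2a i hi, h2b i hi, add_zero],
          by show ca iw + cb iw = za + zb; rw [h3a, h3b]⟩
      zero_mem' := by exact ⟨fun _ => 0, by simp, fun _ _ => rfl, rfl⟩
      smul_mem' := by
        rintro r za ⟨ca, h1a, h2a, h3a⟩
        exact ⟨fun i => r • ca i, rel_smul r ca h1a,
          fun i hi => by show r • ca i = 0; rw [h2a i hi, smul_zero],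
          by show r • ca iw = r • za; rw [h3a]⟩ }
  have memJ : ∀ z : A, z ∈ J ↔ ∃ c' : Fin n → A, (∑ i, M.smulA (c' i) (v i)) = 0 ∧
      (∀ i, i ∉ T → c' i = 0) ∧ c' iw = z := fun z => Iff.rfl
  have hJleft : ∀ (a z : A), z ∈ J → a * z ∈ J := by
    rintro a z ⟨ca, h1, h2, h3⟩
    exact ⟨fun i => a * ca i, rel_mul a ca h1,
      fun i hi => by show a * ca i = 0; rw [h2 i hi, mul_zero],
      by show a * ca iw = a * z; rw [h3]⟩
  have hJact : ∀ (d : D) (z : A), z ∈ J → S.act d z ∈ J := by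
    rintro d z ⟨ca, h1, h2, h3⟩
    exact ⟨fun i => S.act d (ca i), rel_act d ca h1,
      fun i hi => by show S.act d (ca i) = 0; rw [h2 i hi, map_zero],
      by show S.act d (ca iw) = S.act d z; rw [h3]⟩
  let Jσ : Submodule R A := J.map (sgA g)
  have hJσleft : ∀ (a z : A), z ∈ Jσ → a * z ∈ Jσ := by
    rintro a z ⟨w, hw, rfl⟩
    have h : a * sgA g w = sgA g (sgA g a * w) := by rw [sgA_mul, sgA_sgA]
    rw [h]
    exact Submodule.mem_map_of_mem (hJleft (sgA g a) w hw)
  have hJσact : ∀ (d : D) (z : A), z ∈ Jσ → S.act d z ∈ Jσ := by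
    rintro d z ⟨w, hw, rfl⟩
    rw [act_sgA_eq H g S d w]
    exact Submodule.mem_map_of_mem (hJact (sgD H d) w hw)
  have hJσJ : ∀ z : A, z ∈ Jσ → sgA g z ∈ J := by
    rintro z ⟨w, hw, rfl⟩
    rw [sgA_sgA]
    exact hw
  let I1 : Submodule R A := J ⊔ Jσ
  let I2 : Submodule R A := J ⊓ Jσ
  have hI1left : ∀ a z : A, z ∈ I1 → a * z ∈ I1 := by
    intro a z hz
    obtain ⟨p, hp, q, hq, rfl⟩ := Submodule.mem_sup.1 hz
    rw [mul_add]
    exact I1.add_mem ((le_sup_left : J ≤ I1) (hJleft a p hp))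
      ((le_sup_right : Jσ ≤ I1) (hJσleft a q hq))
  have hI1sg : ∀ z ∈ I1, sgA g z ∈ I1 := by
    intro z hz
    obtain ⟨p, hp, q, hq, rfl⟩ := Submodule.mem_sup.1 hz
    rw [map_add]
    exact I1.add_mem ((le_sup_right : Jσ ≤ I1) (Submodule.mem_map_of_mem hp))
      ((le_sup_left : J ≤ I1) (hJσJ q hq))
  have hI1act : ∀ (d : D), ∀ z ∈ I1, S.act d z ∈ I1 := by
    intro d z hz
    obtain ⟨p, hp, q, hq, rfl⟩ := Submodule.mem_sup.1 hz
    rw [map_add]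
    exact I1.add_mem ((le_sup_left : J ≤ I1) (hJact d p hp))
      ((le_sup_right : Jσ ≤ I1) (hJσact d q hq))
  have hI2left : ∀ a z : A, z ∈ I2 → a * z ∈ I2 := by
    intro a z hz
    exact Submodule.mem_inf.2 ⟨hJleft a z (Submodule.mem_inf.1 hz).1,
      hJσleft a z (Submodule.mem_inf.1 hz).2⟩
  have hI2sg : ∀ z ∈ I2, sgA g z ∈ I2 := by
    intro z hz
    exact Submodule.mem_inf.2 ⟨hJσJ z (Submodule.mem_inf.1 hz).2,
      Submodule.mem_map_of_mem (Submodule.mem_inf.1 hz).1⟩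
  have hI2act : ∀ (d : D), ∀ z ∈ I2, S.act d z ∈ I2 := by
    intro d z hz
    exact Submodule.mem_inf.2 ⟨hJact d z (Submodule.mem_inf.1 hz).1,
      hJσact d z (Submodule.mem_inf.1 hz).2⟩
  have hciwJ : c iw ∈ J := ⟨c, hcrel, hcsupp, rfl⟩
  have hI1top : I1 = ⊤ := by
    rcases hs.2 I1 (superideal_of g hg I1 hI1left hI1sg) hI1act with h | h
    · exfalso
      have : c iw ∈ (⊥ : Submodule R A) := h ▸ (le_sup_left : J ≤ I1) hciwJ
      exact hiw (by simpa using this)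
    · exact h
  -- extracting invariance from minimality
  have inv_of : ∀ (c1 : Fin n → A), (∑ i, M.smulA (c1 i) (v i)) = 0 →
      (∀ i, i ∉ T → c1 i = 0) →
      (∀ d : D, S.act d (c1 iw) - H.counit d • c1 iw = 0) →
      ∀ i, c1 i ∈ S.invariants := by
    intro c1 h1 h2 h3 i
    rw [mem_invariants_iff]
    intro d
    have hz := hmin (fun j => S.act d (c1 j) - H.counit d • c1 j) (rel_e d c1 h1)
      (fun j hj => by show S.act d (c1 j) - H.counit d • c1 j = 0; rw [h2 j hj]; simp) (h3 d) i
    exact sub_eq_zero.1 hz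
  rcases hs.2 I2 (superideal_of g hg I2 hI2left hI2sg) hI2act with hI2bot | hI2top
  · -- I2 = ⊥ : use 1 = z + σ z'
    have h1I1 : (1 : A) ∈ I1 := hI1top ▸ Submodule.mem_top
    obtain ⟨z, hz, w, hw, hzw⟩ := Submodule.mem_sup.1 h1I1
    obtain ⟨z', hz', rfl⟩ := hw
    have key2 : ∀ d : D, (S.act d z - H.counit d • z = 0) ∧
        (S.act (sgD H d) z' - H.counit d • z' = 0) := by
      intro d
      have hxJ : S.act d z - H.counit d • z ∈ J :=
        J.sub_mem (hJact d z hz) (J.smul_mem _ hz)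
      have hyJ : S.act (sgD H d) z' - H.counit d • z' ∈ J :=
        J.sub_mem (hJact _ z' hz') (J.smul_mem _ hz')
      have heq : (S.act d z - H.counit d • z)
          + sgA g (S.act (sgD H d) z' - H.counit d • z') = 0 := by
        have e1 : S.act d (z + sgA g z') = H.counit d • (z + sgA g z') := by
          rw [hzw, S.act_algebra_one d]
        rw [map_add, act_sgA_eq H g S d z', smul_add] at e1
        rw [map_sub, map_smul, sub_add_sub_comm, e1, sub_self]
      have hxJσ : S.act d z - H.counit d • z ∈ Jσ := by
        have hx_eq : S.act d z - H.counit d • z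
            = sgA g (-(S.act (sgD H d) z' - H.counit d • z')) := by
          rw [map_neg]
          exact eq_neg_of_add_eq_zero_left heq
        rw [hx_eq]
        exact Submodule.mem_map_of_mem (J.neg_mem hyJ)
      have hx0 : S.act d z - H.counit d • z = 0 := by
        have hmem : S.act d z - H.counit d • z ∈ I2 := Submodule.mem_inf.2 ⟨hxJ, hxJσ⟩
        rw [hI2bot] at hmem
        simpa using hmem
      have hy0 : S.act (sgD H d) z' - H.counit d • z' = 0 := by
        have hsg0 : sgA g (S.act (sgD H d) z' - H.counit d • z') = 0 := by
          rw [hx0, zero_add] at heq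
          exact heq
        have := congrArg (sgA g) hsg0
        rwa [sgA_sgA, map_zero] at this
      exact ⟨hx0, hy0⟩
    obtain ⟨c1, h1, h2, h3⟩ := hz
    obtain ⟨c2, k1, k2, k3⟩ := hz'
    have hc1inv := inv_of c1 h1 h2 (fun d => by rw [h3]; exact (key2 d).1)
    have hz0 : z = 0 := by rw [← h3]; exact hLI c1 hc1inv h1 iw
    have hz'invd : ∀ d : D, S.act d z' - H.counit d • z' = 0 := by
      intro d
      have h := (key2 (sgD H d)).2
      rwa [sgD_sgD, counit_sgD] at h
    have hc2inv := inv_of c2 k1 k2 (fun d => by rw [k3]; exact hz'invd d)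
    have hz'0 : z' = 0 := by rw [← k3]; exact hLI c2 hc2inv k1 iw
    rw [hz0, hz'0, map_zero, add_zero] at hzw
    exact hs.1 hzw.symm
  · -- I2 = ⊤ : 1 ∈ J
    have h1J : (1 : A) ∈ J := (Submodule.mem_inf.1 (hI2top ▸ Submodule.mem_top)).1
    obtain ⟨c1, h1, h2, h3⟩ := h1J
    have hc1inv := inv_of c1 h1 h2 (fun d => by rw [h3, S.act_algebra_one d, sub_self])
    have hall := hLI c1 hc1inv h1
    exact hs.1 (by rw [← h3, hall iw])
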